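/- Unused cups stay unused: let a_1 > a_2 > ... > a_n > a_{n+1} > 0. If the unique maximizer x* of F_n(x) = Σ_{i=1}^n a_i x_i/(1+x_i) over the simplex S_n satisfies x*_n = 0, then the unique maximizer y* of F_{n+1}(y) = Σ_{i=1}^{n+1} a_i y_i/(1+y_i) over the simplex S_{n+1} satisfies y*_{n+1} = 0 and y* = (x*_1, ..., x*_n, 0). -/

import Mathlib

private lemma sum_diff_two {m : ℕ} (i j : Fin m) (hij : i ≠ j) (u v : Fin m → ℝ)
    (h : ∀ k, k ≠ i → k ≠ j → u k = v k) :
    ∑ k, u k - ∑ k, v k = (u i - v i) + (u j - v j) := by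
  have h0 : ∀ k ∈ Finset.univ, k ∉ ({i, j} : Finset (Fin m)) → u k - v k = 0 := by
    intro k _ hk
    simp only [Finset.mem_insert, Finset.mem_singleton, not_or] at hk
    rw [h k hk.1 hk.2, sub_self]
  rw [← Finset.sum_sub_distrib, ← Finset.sum_subset (Finset.subset_univ _) h0,
    Finset.sum_pair hij]

private lemma kkt_of_max {m : ℕ} (c : Fin m → ℝ) (hc : ∀ i, 0 < c i)
    (x : Fin m → ℝ) (hx1 : ∑ i, x i = 1) (hx0 : ∀ i, 0 ≤ x i)
    (hmax : ∀ y : Fin m → ℝ, (∑ i, y i = 1 ∧ ∀ i, 0 ≤ y i) →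
      ∑ i, c i * y i / (1 + y i) ≤ ∑ i, c i * x i / (1 + x i))
    (i j : Fin m) (hxi : 0 < x i) :
    c j / (1 + x j)^2 ≤ c i / (1 + x i)^2 := by
  rcases eq_or_ne j i with rfl | hij
  · exact le_refl _
  have hxi' : (0:ℝ) < 1 + x i := by linarith
  have hxj' : (0:ℝ) < 1 + x j := by linarith [hx0 j]
  have key : ∀ ε : ℝ, 0 < ε → ε ≤ x i →
      c j * ((1 + x i) * (1 + x i - ε)) ≤ c i * ((1 + x j) * (1 + x j + ε)) := by
    intro ε hε hεi
    set y : Fin m → ℝ := Function.update (Function.update x i (x i - ε)) j (x j + ε) with hy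
    have hyj : y j = x j + ε := Function.update_self _ _ _
    have hyi : y i = x i - ε := by
      rw [hy, Function.update_of_ne (Ne.symm hij), Function.update_self]
    have hyk : ∀ k, k ≠ i → k ≠ j → y k = x k := by
      intro k hki hkj
      rw [hy, Function.update_of_ne hkj, Function.update_of_ne hki]
    have hsum : ∑ k, y k = 1 := by
      have h := sum_diff_two i j (Ne.symm hij) y x (fun k h1 h2 => hyk k h1 h2)
      rw [hyi, hyj] at h
      linarith
    have hnn : ∀ k, 0 ≤ y k := by
      intro k
      rcases eq_or_ne k i with rfl | hki
      · rw [hyi]; linarith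
      rcases eq_or_ne k j with rfl | hkj
      · rw [hyj]; linarith [hx0 k]
      · rw [hyk k hki hkj]; exact hx0 k
    have hle := hmax y ⟨hsum, hnn⟩
    have hdf := sum_diff_two i j (Ne.symm hij)
      (fun k => c k * y k / (1 + y k)) (fun k => c k * x k / (1 + x k))
      (fun k h1 h2 => by simp only [hyk k h1 h2])
    simp only [hyi, hyj] at hdf
    have hεa : (0:ℝ) < 1 + x i - ε := by linarith
    have hεb : (0:ℝ) < 1 + x j + ε := by linarith
    have e1 : c i * (x i - ε) / (1 + (x i - ε)) - c i * x i / (1 + x i)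
        = - (c i * ε / ((1 + x i) * (1 + x i - ε))) := by
      rw [show (1 + (x i - ε)) = 1 + x i - ε by ring]
      field_simp
      ring
    have e2 : c j * (x j + ε) / (1 + (x j + ε)) - c j * x j / (1 + x j)
        = c j * ε / ((1 + x j) * (1 + x j + ε)) := by
      rw [show (1 + (x j + ε)) = 1 + x j + ε by ring]
      field_simp
      ring
    rw [e1, e2] at hdf
    have h4 : c j * ε / ((1 + x j) * (1 + x j + ε)) ≤ c i * ε / ((1 + x i) * (1 + x i - ε)) := by
      linarith
    rw [div_le_div_iff₀ (by positivity) (by positivity)] at h4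
    refine le_of_mul_le_mul_left ?_ hε
    calc ε * (c j * ((1 + x i) * (1 + x i - ε)))
        = c j * ε * ((1 + x i) * (1 + x i - ε)) := by ring
      _ ≤ c i * ε * ((1 + x j) * (1 + x j + ε)) := h4
      _ = ε * (c i * ((1 + x j) * (1 + x j + ε))) := by ring
  rw [div_le_div_iff₀ (by positivity) (by positivity)]
  by_contra hcon
  push_neg at hcon
  have hD : 0 < c j * (1 + x i)^2 - c i * (1 + x j)^2 := by linarith
  have hM : 0 < c j * (1 + x i) + c i * (1 + x j) := add_pos (mul_pos (hc j) hxi') (mul_pos (hc i) hxj')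
  set D := c j * (1 + x i)^2 - c i * (1 + x j)^2 with hDdef
  set M := c j * (1 + x i) + c i * (1 + x j) with hMdef
  have hε : 0 < min (x i) (D / (2 * M)) := lt_min hxi (div_pos hD (by linarith))
  have h5 := key (min (x i) (D / (2 * M))) hε (min_le_left _ _)
  have h6 : D ≤ (min (x i) (D / (2 * M))) * M := by
    have he : c j * ((1 + x i) * (1 + x i - min (x i) (D / (2 * M))))
        - c i * ((1 + x j) * (1 + x j + min (x i) (D / (2 * M))))
        = D - (min (x i) (D / (2 * M))) * M := by
      rw [hDdef, hMdef]; ring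
    linarith
  have h7 : (min (x i) (D / (2 * M))) * M ≤ D / 2 := by
    calc (min (x i) (D / (2 * M))) * M ≤ (D / (2 * M)) * M :=
          mul_le_mul_of_nonneg_right (min_le_right _ _) hM.le
      _ = D / 2 := by field_simp
  linarith

private lemma global_strict {m : ℕ} (c : Fin m → ℝ) (hc : ∀ i, 0 < c i)
    (w : Fin m → ℝ) (hw1 : ∑ i, w i = 1) (hw0 : ∀ i, 0 ≤ w i) (lam : ℝ)
    (hle : ∀ i, c i / (1 + w i)^2 ≤ lam)
    (heq : ∀ i, 0 < w i → lam ≤ c i / (1 + w i)^2)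
    (y : Fin m → ℝ) (hy1 : ∑ i, y i = 1) (hy0 : ∀ i, 0 ≤ y i)
    (hne : y ≠ w) :
    ∑ i, c i * y i / (1 + y i) < ∑ i, c i * w i / (1 + w i) := by
  have hwpos : ∀ k, (0:ℝ) < 1 + w k := fun k => by linarith [hw0 k]
  have hypos : ∀ k, (0:ℝ) < 1 + y k := fun k => by linarith [hy0 k]
  set q : Fin m → ℝ := fun k => c k * (y k - w k)^2 / ((1 + w k)^2 * (1 + y k)) with hq
  have hid : ∀ k, c k * y k / (1 + y k) - c k * w k / (1 + w k)
      = c k / (1 + w k)^2 * (y k - w k) - q k := by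
    intro k
    simp only [hq]
    have h1 := (hwpos k).ne'
    have h2 := (hypos k).ne'
    field_simp
    ring
  have hstep : ∀ k, c k * y k / (1 + y k) - c k * w k / (1 + w k)
      ≤ lam * (y k - w k) - q k := by
    intro k
    rw [hid k]
    have hmain : c k / (1 + w k)^2 * (y k - w k) ≤ lam * (y k - w k) := by
      rcases le_or_gt (w k) (y k) with h | h
      · exact mul_le_mul_of_nonneg_right (hle k) (by linarith)
      · have hwk : 0 < w k := lt_of_le_of_lt (hy0 k) h
        exact mul_le_mul_of_nonpos_right (heq k hwk) (by linarith)
    linarith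
  have hq0 : ∀ k, 0 ≤ q k := by
    intro k
    simp only [hq]
    have := hwpos k
    have := hypos k
    have := (hc k).le
    positivity
  obtain ⟨k0, hk0⟩ := Function.ne_iff.mp hne
  have hqk0 : 0 < q k0 := by
    simp only [hq]
    have hsq : 0 < (y k0 - w k0)^2 := by
      rcases (sub_ne_zero.mpr hk0).lt_or_gt with h | h <;> nlinarith
    have h1 := hwpos k0
    have h2 := hypos k0
    have h3 := hc k0
    positivity
  have hsum : ∑ k, (c k * y k / (1 + y k) - c k * w k / (1 + w k))
      ≤ ∑ k, (lam * (y k - w k) - q k) := Finset.sum_le_sum (fun k _ => hstep k)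
  have h1 : ∑ k, (c k * y k / (1 + y k) - c k * w k / (1 + w k))
      = ∑ k, c k * y k / (1 + y k) - ∑ k, c k * w k / (1 + w k) := Finset.sum_sub_distrib _ _
  have h2 : ∑ k, (lam * (y k - w k) - q k)
      = lam * (∑ k, y k - ∑ k, w k) - ∑ k, q k := by
    rw [Finset.sum_sub_distrib, ← Finset.mul_sum, Finset.sum_sub_distrib]
  have h3 : q k0 ≤ ∑ k, q k := Finset.single_le_sum (fun k _ => hq0 k) (Finset.mem_univ k0)
  rw [h1, h2, hy1, hw1] at hsum
  linarith

/-- unused cups stay unused: let `a 0 > a 1 > ⋯ > a n > 0` (so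
`a` has `n + 1` entries; the first `n` are the original cups). If the unique
maximizer `xs` of `Fₙ` over the simplex `Sₙ` has last coordinate `0`, then the unique
maximizer of `F_{n+1}` over `S_{n+1}` is `w = Fin.snoc xs 0 = (xs 0, …, xs (n-1), 0)`;
in particular its last coordinate is `0`. -/
theorem stmt_17 (n : ℕ) (hn : 2 ≤ n) (a : Fin (n + 1) → ℝ)
    (ha : StrictAnti a) (hpos : ∀ i, 0 < a i)
    (xs : Fin n → ℝ)
    (hmem : ∑ i, xs i = 1 ∧ ∀ i, 0 ≤ xs i)
    (hmax : ∀ y : Fin n → ℝ, (∑ i, y i = 1 ∧ ∀ i, 0 ≤ y i) →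
      ∑ i, a i.castSucc * y i / (1 + y i) ≤ ∑ i, a i.castSucc * xs i / (1 + xs i))
    (huniq : ∀ z : Fin n → ℝ, (∑ i, z i = 1 ∧ ∀ i, 0 ≤ z i) →
      (∀ y : Fin n → ℝ, (∑ i, y i = 1 ∧ ∀ i, 0 ≤ y i) →
        ∑ i, a i.castSucc * y i / (1 + y i) ≤ ∑ i, a i.castSucc * z i / (1 + z i)) →
      z = xs)
    (hlast : xs ⟨n - 1, by omega⟩ = 0)
    (w : Fin (n + 1) → ℝ) (hw : w = Fin.snoc xs (0 : ℝ)) :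
    (w (Fin.last n) = 0) ∧
    ((∑ i, w i = 1 ∧ ∀ i, 0 ≤ w i) ∧
      (∀ y : Fin (n + 1) → ℝ, (∑ i, y i = 1 ∧ ∀ i, 0 ≤ y i) →
        ∑ i, a i * y i / (1 + y i) ≤ ∑ i, a i * w i / (1 + w i))) ∧
    (∀ z : Fin (n + 1) → ℝ, (∑ i, z i = 1 ∧ ∀ i, 0 ≤ z i) →
      (∀ y : Fin (n + 1) → ℝ, (∑ i, y i = 1 ∧ ∀ i, 0 ≤ y i) →
        ∑ i, a i * y i / (1 + y i) ≤ ∑ i, a i * z i / (1 + z i)) →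
      z = w) := by
  subst hw
  obtain ⟨hxs1, hxs0⟩ := hmem
  have hex : ∃ i0, 0 < xs i0 := by
    by_contra h
    push_neg at h
    have hall : ∀ i, xs i = 0 := fun i => le_antisymm (h i) (hxs0 i)
    rw [Finset.sum_congr rfl (fun i _ => hall i)] at hxs1
    simp at hxs1
  obtain ⟨i0, hi0⟩ := hex
  have hcpos : ∀ i : Fin n, 0 < a i.castSucc := fun i => hpos _
  have hB : ∀ j : Fin n, a j.castSucc / (1 + xs j)^2 ≤ a i0.castSucc / (1 + xs i0)^2 :=
    fun j => kkt_of_max (fun i => a i.castSucc) hcpos xs hxs1 hxs0 hmax i0 j hi0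
  have hBeq : ∀ j : Fin n, 0 < xs j →
      a i0.castSucc / (1 + xs i0)^2 ≤ a j.castSucc / (1 + xs j)^2 :=
    fun j hj => kkt_of_max (fun i => a i.castSucc) hcpos xs hxs1 hxs0 hmax j i0 hj
  have hwlast : (Fin.snoc xs (0:ℝ) : Fin (n+1) → ℝ) (Fin.last n) = 0 := Fin.snoc_last _ _
  have hwc : ∀ k : Fin n, (Fin.snoc xs (0:ℝ) : Fin (n+1) → ℝ) k.castSucc = xs k :=
    fun k => Fin.snoc_castSucc _ _ _
  have hw1 : ∑ i, (Fin.snoc xs (0:ℝ) : Fin (n+1) → ℝ) i = 1 := by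
    rw [Fin.sum_univ_castSucc]
    simp only [hwc, hwlast, hxs1, add_zero]
  have hw0 : ∀ i, 0 ≤ (Fin.snoc xs (0:ℝ) : Fin (n+1) → ℝ) i := by
    intro i
    induction i using Fin.lastCases with
    | last => rw [hwlast]
    | cast k => rw [hwc]; exact hxs0 k
  have hle' : ∀ i : Fin (n+1),
      a i / (1 + (Fin.snoc xs (0:ℝ) : Fin (n+1) → ℝ) i)^2 ≤ a i0.castSucc / (1 + xs i0)^2 := by
    intro i
    induction i using Fin.lastCases with
    | last =>
      rw [hwlast]
      have h1 : a (Fin.last n) < a ((⟨n-1, by omega⟩ : Fin n).castSucc) :=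
        ha (Fin.castSucc_lt_last _)
      have h2 := hB ⟨n-1, by omega⟩
      rw [hlast] at h2
      norm_num [Fin.castSucc_mk] at h1 h2 ⊢
      linarith
    | cast k => rw [hwc]; exact hB k
  have heq' : ∀ i : Fin (n+1), 0 < (Fin.snoc xs (0:ℝ) : Fin (n+1) → ℝ) i →
      a i0.castSucc / (1 + xs i0)^2 ≤ a i / (1 + (Fin.snoc xs (0:ℝ) : Fin (n+1) → ℝ) i)^2 := by
    intro i
    induction i using Fin.lastCases with
    | last => rw [hwlast]; intro h; exact absurd h (lt_irrefl 0)
    | cast k => intro h; rw [hwc] at h ⊢; exact hBeq k h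
  refine ⟨hwlast, ⟨⟨hw1, hw0⟩, ?_⟩, ?_⟩
  · intro y hy
    rcases eq_or_ne y (Fin.snoc xs (0:ℝ)) with rfl | hne
    · exact le_refl _
    · exact (global_strict a hpos _ hw1 hw0 _ hle' heq' y hy.1 hy.2 hne).le
  · intro z hz hzmax
    by_contra hne
    have h1 := global_strict a hpos _ hw1 hw0 _ hle' heq' z hz.1 hz.2 hne
    have h2 := hzmax (Fin.snoc xs 0) ⟨hw1, hw0⟩
    linarith
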